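/- arXiv:1601.05042 — 2 statements merged into one kernel-verified Lean document; each statement's English description precedes it below -/
import Mathlib

section
/- Let κ be a positive integer and M an integer with 2M ≥ κ. Let m : [0,∞) → ℂ be continuous, κ-times continuously differentiable on (0,∞), and assume: (i) sup_{0≤j≤κ} sup_{λ>0} λ^j |m^{(j)}(λ)| < ∞, and (ii) lim_{λ→0⁺} λ^j m^{(j)}(λ) = 0 for every j = 1, …, κ. Then for every R > 0, lim_{t→0⁺} max_{0≤j≤κ} sup_{λ∈(0,R]} | (d/dλ)^j [ (m(tλ) − m(0)) · λ^{2M} ] | = 0, where the derivatives are taken on (0,∞). -/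
open Filter Topology

-- test auxiliary lemma 1: iterated deriv of (y:ℂ)^n
lemma aux_pow (n : ℕ) : ∀ (k : ℕ) (x : ℝ),
    iteratedDeriv k (fun y : ℝ => (y:ℂ)^n) x = (n.descFactorial k : ℂ) * (x:ℂ)^(n-k) := by
  intro k
  induction k with
  | zero => intro x; simp
  | succ k IH =>
    intro x
    rw [iteratedDeriv_succ]
    have h1 : iteratedDeriv k (fun y : ℝ => (y:ℂ)^n)
        = fun z : ℝ => (n.descFactorial k : ℂ) * (z:ℂ)^(n-k) := funext IH
    rw [h1]
    have h2 := ((hasDerivAt_pow (n-k) ((x:ℝ):ℂ)).comp_ofReal).const_mul ((n.descFactorial k : ℂ))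
    rw [h2.deriv]
    rw [Nat.descFactorial_succ]
    have : n - (k+1) = n - k - 1 := by omega
    rw [this]
    push_cast
    ring


lemma aux_scale {κ : ℕ} {m : ℝ → ℂ} (hsmooth : ContDiffOn ℝ κ m (Set.Ioi 0)) {t : ℝ} (ht : 0 < t) :
    ∀ i, i ≤ κ → ∀ x : ℝ, 0 < x →
      iteratedDerivWithin i (fun y => m (t * y)) (Set.Ioi 0) x
        = (t:ℂ)^i * iteratedDerivWithin i m (Set.Ioi 0) (t*x) := by
  intro i
  induction i with
  | zero => intro _ x _; simp
  | succ i IH =>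
    intro hik x hx
    have hU : UniqueDiffOn ℝ (Set.Ioi (0:ℝ)) := isOpen_Ioi.uniqueDiffOn
    have htx : t * x ∈ Set.Ioi (0:ℝ) := mul_pos ht hx
    have hdiffφ : DifferentiableOn ℝ (iteratedDerivWithin i m (Set.Ioi 0)) (Set.Ioi 0) :=
      hsmooth.differentiableOn_iteratedDerivWithin (by exact_mod_cast hik) hU
    have hder : HasDerivAt (iteratedDerivWithin i m (Set.Ioi 0))
        (iteratedDerivWithin (i+1) m (Set.Ioi 0) (t*x)) (t*x) := by
      have h1 : DifferentiableAt ℝ (iteratedDerivWithin i m (Set.Ioi 0)) (t*x) :=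
        (hdiffφ (t*x) htx).differentiableAt (isOpen_Ioi.mem_nhds htx)
      have h2 := h1.hasDerivAt
      rwa [← derivWithin_of_isOpen isOpen_Ioi htx, ← iteratedDerivWithin_succ] at h2
    have hlin : HasDerivAt (fun y : ℝ => t * y) t x := by
      simpa using (hasDerivAt_id x).const_mul t
    have hcomp : HasDerivAt (fun y => iteratedDerivWithin i m (Set.Ioi 0) (t*y))
        (t • iteratedDerivWithin (i+1) m (Set.Ioi 0) (t*x)) x := hder.scomp x hlin
    have hmain := hcomp.const_mul ((t:ℂ)^i)
    rw [iteratedDerivWithin_succ, derivWithin_of_isOpen isOpen_Ioi hx]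
    have heq : iteratedDerivWithin i (fun y => m (t*y)) (Set.Ioi 0)
        =ᶠ[𝓝 x] fun y => (t:ℂ)^i * iteratedDerivWithin i m (Set.Ioi 0) (t*y) := by
      filter_upwards [isOpen_Ioi.mem_nhds hx] with y hy
      exact IH (Nat.le_of_succ_le hik) y hy
    rw [heq.deriv_eq, hmain.deriv, Complex.real_smul]
    ring


lemma aux_idw_open {f : ℝ → ℂ} {k : ℕ} {x : ℝ} (hx : x ∈ Set.Ioi (0:ℝ)) :
    iteratedDerivWithin k f (Set.Ioi 0) x = iteratedDeriv k f x := by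
  rw [iteratedDerivWithin_eq_iteratedFDerivWithin, iteratedDeriv,
    iteratedFDerivWithin_of_isOpen k isOpen_Ioi hx]

/-- If `m` is continuous on `[0,∞)`, `C^κ` on `(0,∞)`, satisfies the Mikhlin
condition of order `κ` and `λ^j m^{(j)}(λ) → 0` as `λ → 0⁺` for `1 ≤ j ≤ κ`,
then for every `R > 0` the `C^κ((0,R])` norm of `λ ↦ (m(tλ) − m(0)) λ^{2M}`
tends to `0` as `t → 0⁺`. -/
theorem stmt_3 (κ M : ℕ) (hκ : 0 < κ) (hM : κ ≤ 2 * M)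
    (m : ℝ → ℂ) (hcont : ContinuousOn m (Set.Ici 0))
    (hsmooth : ContDiffOn ℝ κ m (Set.Ioi 0))
    (hMikh : ∃ A : ℝ, ∀ j ≤ κ, ∀ x : ℝ, 0 < x →
      x ^ j * ‖iteratedDerivWithin j m (Set.Ioi 0) x‖ ≤ A)
    (hvan : ∀ j, 1 ≤ j → j ≤ κ →
      Tendsto (fun x : ℝ => (x : ℂ) ^ j * iteratedDerivWithin j m (Set.Ioi 0) x)
        (𝓝[>] (0:ℝ)) (𝓝 0)) :
    ∀ R : ℝ, 0 < R → ∀ ε : ℝ, 0 < ε → ∃ δ : ℝ, 0 < δ ∧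
      ∀ t : ℝ, 0 < t → t < δ → ∀ j ≤ κ, ∀ x : ℝ, 0 < x → x ≤ R →
        ‖iteratedDerivWithin j
          (fun y : ℝ => (m (t * y) - m 0) * (y : ℂ) ^ (2 * M)) (Set.Ioi 0) x‖ < ε := by
  intro R hR ε hε
  have hU : UniqueDiffOn ℝ (Set.Ioi (0:ℝ)) := isOpen_Ioi.uniqueDiffOn
  set C : ℝ := (2*(M:ℝ)+1)^κ * (max 1 R)^(2*M) with hC
  have hC0 : 0 < C := by positivity
  set K : ℝ := 2^κ * C + 1 with hKdef
  have hK0 : (0:ℝ) < K := by positivity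
  set ε₁ : ℝ := ε / K with hε₁def
  have hε₁ : 0 < ε₁ := by positivity
  -- eventual smallness near 0
  have h0 : ∀ᶠ s in 𝓝[>] (0:ℝ), ‖m s - m 0‖ < ε₁ := by
    have h := Metric.tendsto_nhds.mp (hcont 0 Set.self_mem_Ici) ε₁ hε₁
    exact ((h.filter_mono (nhdsWithin_mono 0 Set.Ioi_subset_Ici_self)).mono
      fun s hs => by rwa [dist_eq_norm] at hs)
  have h1 : ∀ᶠ s : ℝ in 𝓝[>] (0:ℝ), ∀ i ∈ Finset.Icc 1 κ,
      ‖(s:ℂ)^i * iteratedDerivWithin i m (Set.Ioi 0) s‖ < ε₁ := by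
    rw [eventually_all_finset]
    intro i hi
    simp only [Finset.mem_Icc] at hi
    have := Metric.tendsto_nhds.mp (hvan i hi.1 hi.2) ε₁ hε₁
    exact this.mono fun s hs => by rwa [dist_zero_right] at hs
  obtain ⟨u, hu, hsubs⟩ := mem_nhdsGT_iff_exists_Ioo_subset.mp (h0.and h1)
  rw [Set.mem_Ioi] at hu
  refine ⟨u / R, div_pos hu hR, ?_⟩
  intro t ht htδ j hj x hx hxR
  have hxS : x ∈ Set.Ioi (0:ℝ) := hx
  have htx0 : 0 < t * x := mul_pos ht hx
  have htxu : t * x < u := by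
    calc t * x ≤ t * R := mul_le_mul_of_nonneg_left hxR ht.le
    _ < (u / R) * R := mul_lt_mul_of_pos_right htδ hR
    _ = u := div_mul_cancel₀ u hR.ne'
  obtain ⟨hPm, hPi⟩ := hsubs ⟨htx0, htxu⟩
  set f : ℝ → ℂ := fun y => m (t * y) - m 0 with hf
  set g : ℝ → ℂ := fun y => (y:ℂ) ^ (2*M) with hg
  have hfc : ContDiffOn ℝ κ f (Set.Ioi 0) := by
    have hmap : Set.MapsTo (fun y : ℝ => t*y) (Set.Ioi 0) (Set.Ioi 0) :=
      fun y hy => mul_pos ht hy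
    exact (hsmooth.comp ((contDiff_const.mul contDiff_id).contDiffOn) hmap).sub contDiffOn_const
  have hgc : ContDiffOn ℝ κ g (Set.Ioi 0) :=
    ((Complex.ofRealCLM.contDiff.pow (2*M)).of_le le_top).contDiffOn
  -- the key pointwise bound on the factors of the Leibniz formula
  have key : ∀ i, i ≤ j → ‖iteratedDerivWithin i f (Set.Ioi 0) x‖ * x^i ≤ ε₁ := by
    intro i hi
    rcases Nat.eq_zero_or_pos i with rfl | hi0
    · simpa [iteratedDerivWithin_zero, hf] using hPm.le
    · have hstep : iteratedDerivWithin i f (Set.Ioi 0) x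
          = (t:ℂ)^i * iteratedDerivWithin i m (Set.Ioi 0) (t*x) := by
        have hcongr : f = fun y : ℝ => (-(m 0)) + m (t*y) := by
          funext y; simp [hf]; ring
        rw [hcongr, iteratedDerivWithin_const_add hi0,
          aux_scale hsmooth ht i (hi.trans hj) x hx]
      have hmem : i ∈ Finset.Icc 1 κ := Finset.mem_Icc.mpr ⟨hi0, hi.trans hj⟩
      have hPi' := (hPi i hmem).le
      have hnorm : ‖((t*x : ℝ):ℂ)^i * iteratedDerivWithin i m (Set.Ioi 0) (t*x)‖
          = ‖iteratedDerivWithin i f (Set.Ioi 0) x‖ * x^i := by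
        rw [hstep]
        rw [norm_mul, norm_mul, norm_pow, norm_pow, Complex.norm_real, Complex.norm_real,
          Real.norm_eq_abs, Real.norm_eq_abs, abs_of_pos ht, abs_of_pos htx0, mul_pow]
        ring
      rw [← hnorm]
      exact hPi'
  -- compute the iterated derivatives of g
  have hgval : ∀ k : ℕ, ‖iteratedDerivWithin k g (Set.Ioi 0) x‖
      = ((2*M).descFactorial k : ℝ) * x^(2*M - k) := by
    intro k
    rw [aux_idw_open hxS, hg, aux_pow (2*M) k x, norm_mul, norm_pow, Complex.norm_real,
      Complex.norm_natCast, Real.norm_eq_abs, abs_of_pos hx]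
  -- Leibniz bound
  have hjN : (j : WithTop ℕ∞) ≤ (κ : WithTop ℕ∞) := by exact_mod_cast hj
  have hleib := norm_iteratedFDerivWithin_mul_le (𝕜 := ℝ) hfc hgc hU hxS hjN
  rw [norm_iteratedFDerivWithin_eq_norm_iteratedDerivWithin] at hleib
  -- bound each term of the sum
  have hterm : ∀ i ∈ Finset.range (j+1),
      (j.choose i : ℝ) * ‖iteratedFDerivWithin ℝ i f (Set.Ioi 0) x‖ *
        ‖iteratedFDerivWithin ℝ (j-i) g (Set.Ioi 0) x‖ ≤ (j.choose i : ℝ) * (ε₁ * C) := by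
    intro i hi
    rw [Finset.mem_range] at hi
    have hi' : i ≤ j := Nat.lt_succ_iff.mp hi
    rw [norm_iteratedFDerivWithin_eq_norm_iteratedDerivWithin,
      norm_iteratedFDerivWithin_eq_norm_iteratedDerivWithin, hgval (j-i)]
    have hsplit : 2*M - (j-i) = i + (2*M - j) := by omega
    rw [hsplit, pow_add]
    have hd : ((2*M).descFactorial (j-i) : ℝ) ≤ (2*(M:ℝ)+1)^κ := by
      have h1 : (2*M).descFactorial (j-i) ≤ (2*M+1)^κ := by
        calc (2*M).descFactorial (j-i) ≤ (2*M)^(j-i) := Nat.descFactorial_le_pow _ _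
        _ ≤ (2*M+1)^(j-i) := Nat.pow_le_pow_left (by omega) _
        _ ≤ (2*M+1)^κ := Nat.pow_le_pow_right (by omega) (le_trans (Nat.sub_le j i) hj)
      calc ((2*M).descFactorial (j-i) : ℝ) ≤ (((2*M+1)^κ : ℕ) : ℝ) := by exact_mod_cast h1
      _ = (2*(M:ℝ)+1)^κ := by push_cast; ring
    have hx2 : x^(2*M - j) ≤ (max 1 R)^(2*M) := by
      calc x^(2*M-j) ≤ (max 1 R)^(2*M-j) :=
            pow_le_pow_left₀ hx.le (hxR.trans (le_max_right 1 R)) _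
      _ ≤ (max 1 R)^(2*M) := pow_le_pow_right₀ (le_max_left 1 R) (Nat.sub_le _ _)
    have hkey := key i hi'
    have hFnn : (0:ℝ) ≤ ‖iteratedDerivWithin i f (Set.Ioi 0) x‖ := norm_nonneg _
    have hbound : ‖iteratedDerivWithin i f (Set.Ioi 0) x‖ *
        (((2*M).descFactorial (j-i) : ℝ) * (x^i * x^(2*M-j))) ≤ ε₁ * C := by
      have e1 : ‖iteratedDerivWithin i f (Set.Ioi 0) x‖ *
          (((2*M).descFactorial (j-i) : ℝ) * (x^i * x^(2*M-j)))
          = (‖iteratedDerivWithin i f (Set.Ioi 0) x‖ * x^i) *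
            (((2*M).descFactorial (j-i) : ℝ) * x^(2*M-j)) := by ring
      rw [e1, hC]
      have h2 : ((2*M).descFactorial (j-i) : ℝ) * x^(2*M-j)
          ≤ (2*(M:ℝ)+1)^κ * (max 1 R)^(2*M) := by
        apply mul_le_mul hd hx2 (by positivity) (by positivity)
      apply mul_le_mul hkey h2 (by positivity) hε₁.le
    calc (j.choose i : ℝ) * ‖iteratedDerivWithin i f (Set.Ioi 0) x‖ *
        (((2*M).descFactorial (j-i) : ℝ) * (x^i * x^(2*M-j)))
        = (j.choose i : ℝ) * (‖iteratedDerivWithin i f (Set.Ioi 0) x‖ *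
          (((2*M).descFactorial (j-i) : ℝ) * (x^i * x^(2*M-j)))) := by ring
    _ ≤ (j.choose i : ℝ) * (ε₁ * C) :=
        mul_le_mul_of_nonneg_left hbound (Nat.cast_nonneg _)
  have hsum : ∑ i ∈ Finset.range (j+1), (j.choose i : ℝ) *
      ‖iteratedFDerivWithin ℝ i f (Set.Ioi 0) x‖ *
      ‖iteratedFDerivWithin ℝ (j-i) g (Set.Ioi 0) x‖
      ≤ ∑ i ∈ Finset.range (j+1), (j.choose i : ℝ) * (ε₁ * C) :=
    Finset.sum_le_sum hterm
  have hsum2 : ∑ i ∈ Finset.range (j+1), (j.choose i : ℝ) * (ε₁ * C)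
      = (2^j : ℝ) * (ε₁ * C) := by
    rw [← Finset.sum_mul]
    congr 1
    rw [← Nat.cast_sum]
    rw [Nat.sum_range_choose]
    push_cast; ring
  have hfinal : ‖iteratedDerivWithin j (fun y => f y * g y) (Set.Ioi 0) x‖
      ≤ (2^j : ℝ) * (ε₁ * C) := by
    calc ‖iteratedDerivWithin j (fun y => f y * g y) (Set.Ioi 0) x‖ ≤ _ := hleib
    _ ≤ _ := hsum
    _ = _ := hsum2
  have h2j : (2^j : ℝ) ≤ 2^κ := pow_le_pow_right₀ one_le_two hj
  have hlt : (2^j : ℝ) * (ε₁ * C) < ε := by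
    have h3 : (2^j : ℝ) * (ε₁ * C) ≤ 2^κ * C * ε₁ := by
      have := mul_le_mul_of_nonneg_right h2j (by positivity : (0:ℝ) ≤ ε₁ * C)
      nlinarith [hε₁.le, hC0.le]
    have h4 : (2^κ * C : ℝ) * ε₁ < K * ε₁ := by
      apply mul_lt_mul_of_pos_right _ hε₁
      rw [hKdef]; linarith
    have h5 : K * ε₁ = ε := by
      rw [hε₁def, mul_div_cancel₀ _ hK0.ne']
    linarith
  exact lt_of_le_of_lt hfinal hlt
end

section
/- Let (Ω, μ) be a σ-finite measure space. Let {T_t}_{t>0} be a family of bounded linear operators on L²(Ω, μ) satisfying the semigroup property T_{t+s} = T_t ∘ T_s for all t, s > 0, and which is strongly continuous on L²: for every f ∈ L²(Ω), ‖T_t f − f‖_{L²} → 0 as t → 0⁺. Assume moreover the contractivity on L¹: for every f ∈ L²(Ω) ∩ L¹(Ω) and every t > 0, T_t f ∈ L¹(Ω) and ‖T_t f‖_{L¹} ≤ ‖f‖_{L¹}. Then for every f ∈ L²(Ω) ∩ L¹(Ω), ‖T_t f − f‖_{L¹} → 0 as t → 0⁺. -/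
open MeasureTheory Filter Topology ENNReal

/-- A semigroup of operators on `L²` that is strongly continuous on `L²` and
contractive on `L¹` is strongly continuous on `L¹`, i.e.
`‖T_t f − f‖_{L¹} → 0` as `t → 0⁺` for `f ∈ L² ∩ L¹`. -/
theorem stmt_14 {Ω : Type*} [MeasurableSpace Ω] (μ : Measure Ω) [SigmaFinite μ]
    (T : ℝ → (Lp ℝ 2 μ →L[ℝ] Lp ℝ 2 μ))
    (hsemi : ∀ t s : ℝ, 0 < t → 0 < s → ∀ f : Lp ℝ 2 μ, T (t + s) f = T t (T s f))
    (hL2cont : ∀ f : Lp ℝ 2 μ,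
      Tendsto (fun t : ℝ => ‖T t f - f‖) (𝓝[>] (0:ℝ)) (𝓝 0))
    (hL1 : ∀ f : Lp ℝ 2 μ, MemLp (⇑f) 1 μ → ∀ t : ℝ, 0 < t →
      MemLp (⇑(T t f)) 1 μ ∧ eLpNorm (⇑(T t f)) 1 μ ≤ eLpNorm (⇑f) 1 μ) :
    ∀ f : Lp ℝ 2 μ, MemLp (⇑f) 1 μ →
      Tendsto (fun t : ℝ => eLpNorm (⇑(T t f) - ⇑f) 1 μ) (𝓝[>] (0:ℝ)) (𝓝 0) := by
  intro f hf
  have hfmeas : AEMeasurable (fun x => (‖f x‖₊ : ℝ≥0∞)) μ :=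
    (Lp.aestronglyMeasurable f).enorm
  have hfint : ∫⁻ x, ‖f x‖₊ ∂μ < ∞ := by
    have := hf.2
    rwa [eLpNorm_one_eq_lintegral_enorm] at this
  rw [ENNReal.tendsto_nhds_zero]
  intro ε hε
  have hε4 : (0:ℝ≥0∞) < ε / 4 := ENNReal.div_pos hε.ne' (by norm_num)
  -- tail of f over complements of spanning sets tends to 0
  have htail : Tendsto (fun n => ∫⁻ x in (spanningSets μ n)ᶜ, ‖f x‖₊ ∂μ) atTop (𝓝 0) := by
    have h1 : ∀ n : ℕ, ∫⁻ x in (spanningSets μ n)ᶜ, ‖f x‖₊ ∂μ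
        = ∫⁻ x, ((spanningSets μ n)ᶜ).indicator (fun x => (‖f x‖₊ : ℝ≥0∞)) x ∂μ := fun n =>
      (lintegral_indicator (measurableSet_spanningSets μ n).compl _).symm
    simp_rw [h1]
    have h0 : (0:ℝ≥0∞) = ∫⁻ _x, (0:ℝ≥0∞) ∂μ := by simp
    rw [h0]
    refine tendsto_lintegral_of_dominated_convergence' (fun x => (‖f x‖₊ : ℝ≥0∞))
      (fun n => hfmeas.indicator (measurableSet_spanningSets μ n).compl) ?_ hfint.ne ?_
    · intro n
      filter_upwards with x
      exact Set.indicator_le_self _ _ x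
    · filter_upwards with x
      obtain ⟨N, hN⟩ : ∃ N, x ∈ spanningSets μ N := by
        have : x ∈ ⋃ n, spanningSets μ n := by
          rw [iUnion_spanningSets]; trivial
        exact Set.mem_iUnion.mp this
      apply tendsto_atTop_of_eventually_const (i₀ := N)
      intro n hn
      have hx : x ∈ spanningSets μ n := monotone_spanningSets μ hn hN
      simp [Set.indicator_of_notMem, hx]
  obtain ⟨n, hn⟩ : ∃ n, ∫⁻ x in (spanningSets μ n)ᶜ, ‖f x‖₊ ∂μ ≤ ε / 4 :=
    ((ENNReal.tendsto_nhds_zero.mp htail (ε / 4) hε4)).exists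
  set A : Set Ω := spanningSets μ n with hAdef
  have hA : MeasurableSet A := measurableSet_spanningSets μ n
  have hAfin : μ A < ∞ := measure_spanningSets_lt_top μ n
  set b : ℝ≥0∞ := ∫⁻ x in Aᶜ, ‖f x‖₊ ∂μ with hbdef
  -- L² convergence in eLpNorm form
  have h2 : Tendsto (fun t : ℝ => eLpNorm (⇑(T t f) - ⇑f) 2 μ) (𝓝[>] (0:ℝ)) (𝓝 0) := by
    have heq : ∀ t : ℝ, eLpNorm (⇑(T t f) - ⇑f) 2 μ = ENNReal.ofReal ‖T t f - f‖ := by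
      intro t
      rw [← eLpNorm_congr_ae (Lp.coeFn_sub (T t f) f), Lp.norm_def,
        ENNReal.ofReal_toReal (Lp.eLpNorm_ne_top _)]
    simp_rw [heq]
    have := ENNReal.tendsto_ofReal (hL2cont f)
    simpa using this
  -- the main ingredient: ∫_A ‖T t f - f‖ is eventually small
  set w : ℝ → ℝ≥0∞ := fun t => ∫⁻ x in A, ‖T t f x - f x‖₊ ∂μ with hwdef
  have hwle : ∀ t : ℝ, w t ≤ eLpNorm (⇑(T t f) - ⇑f) 2 μ * (μ A) ^ (1/2 : ℝ) := by
    intro t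
    have hm : AEStronglyMeasurable (⇑(T t f) - ⇑f) (μ.restrict A) :=
      ((Lp.aestronglyMeasurable (T t f)).sub (Lp.aestronglyMeasurable f)).restrict
    have h1 : w t = eLpNorm (⇑(T t f) - ⇑f) 1 (μ.restrict A) := by
      rw [eLpNorm_one_eq_lintegral_enorm]
      simp_rw [Pi.sub_apply]
      rfl
    have h2' := eLpNorm_le_eLpNorm_mul_rpow_measure_univ (μ := μ.restrict A)
      (p := 1) (q := 2) (f := ⇑(T t f) - ⇑f) one_le_two hm
    have hexp : (1 / (1:ℝ≥0∞).toReal - 1 / (2:ℝ≥0∞).toReal) = (1/2 : ℝ) := by norm_num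
    rw [hexp, Measure.restrict_apply_univ] at h2'
    calc w t = eLpNorm (⇑(T t f) - ⇑f) 1 (μ.restrict A) := h1
      _ ≤ eLpNorm (⇑(T t f) - ⇑f) 2 (μ.restrict A) * (μ A) ^ (1/2 : ℝ) := h2'
      _ ≤ eLpNorm (⇑(T t f) - ⇑f) 2 μ * (μ A) ^ (1/2 : ℝ) :=
        mul_le_mul_left (eLpNorm_mono_measure _ Measure.restrict_le_self) _
  have hCne : (μ A) ^ (1/2 : ℝ) ≠ ∞ := by
    exact (ENNReal.rpow_lt_top_of_nonneg (by norm_num) hAfin.ne).ne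
  have hbnd : Tendsto (fun t : ℝ => eLpNorm (⇑(T t f) - ⇑f) 2 μ * (μ A) ^ (1/2 : ℝ))
      (𝓝[>] (0:ℝ)) (𝓝 0) := by
    have := ENNReal.Tendsto.mul_const h2 (Or.inr hCne)
    simpa using this
  have hwsmall : ∀ᶠ t in 𝓝[>] (0:ℝ), w t ≤ ε / 4 := by
    filter_upwards [ENNReal.tendsto_nhds_zero.mp hbnd (ε / 4) hε4] with t ht
    exact (hwle t).trans ht
  -- key inequality
  have key : ∀ t : ℝ, 0 < t → eLpNorm (⇑(T t f) - ⇑f) 1 μ ≤ 2 * w t + 2 * b := by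
    intro t ht
    obtain ⟨hmem, hcontr⟩ := hL1 f hf t ht
    rw [eLpNorm_one_eq_lintegral_enorm, eLpNorm_one_eq_lintegral_enorm] at hcontr
    have hgmeas : AEMeasurable (fun x => (‖T t f x‖₊ : ℝ≥0∞)) μ :=
      (Lp.aestronglyMeasurable (T t f)).enorm
    have hgfin : ∫⁻ x, ‖T t f x‖₊ ∂μ < ∞ := hcontr.trans_lt hfint
    set u : ℝ≥0∞ := ∫⁻ x in A, ‖T t f x‖₊ ∂μ with hudef
    set v : ℝ≥0∞ := ∫⁻ x in Aᶜ, ‖T t f x‖₊ ∂μ with hvdef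
    set a : ℝ≥0∞ := ∫⁻ x in A, ‖f x‖₊ ∂μ with hadef
    set w' : ℝ≥0∞ := ∫⁻ x in Aᶜ, ‖T t f x - f x‖₊ ∂μ with hw'def
    have split1 : u + v = ∫⁻ x, ‖T t f x‖₊ ∂μ :=
      lintegral_add_compl _ hA
    have split2 : a + b = ∫⁻ x, ‖f x‖₊ ∂μ :=
      lintegral_add_compl _ hA
    have hune : u ≠ ∞ := by
      refine ne_of_lt (lt_of_le_of_lt ?_ hgfin)
      rw [← split1]; exact le_self_add
    have ha1 : a ≤ u + w t := by
      have hpt : ∀ x, (‖f x‖₊ : ℝ≥0∞) ≤ ‖T t f x‖₊ + ‖T t f x - f x‖₊ := by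
        intro x
        have : ‖f x‖₊ ≤ ‖T t f x‖₊ + ‖T t f x - f x‖₊ := by
          calc ‖f x‖₊ = ‖T t f x - (T t f x - f x)‖₊ := by rw [_root_.sub_sub_cancel]
            _ ≤ ‖T t f x‖₊ + ‖T t f x - f x‖₊ := nnnorm_sub_le _ _
        exact_mod_cast this
      calc a ≤ ∫⁻ x in A, ((‖T t f x‖₊ : ℝ≥0∞) + ‖T t f x - f x‖₊) ∂μ :=
            lintegral_mono fun x => hpt x
        _ = u + w t := lintegral_add_left' hgmeas.restrict _
    have hv : v ≤ w t + b := by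
      have h3 : u + v ≤ u + (w t + b) := by
        calc u + v = ∫⁻ x, ‖T t f x‖₊ ∂μ := split1
          _ ≤ ∫⁻ x, ‖f x‖₊ ∂μ := hcontr
          _ = a + b := split2.symm
          _ ≤ (u + w t) + b := add_le_add_left ha1 _
          _ = u + (w t + b) := by ring
      exact (ENNReal.add_le_add_iff_left hune).mp h3
    have hw' : w' ≤ v + b := by
      have hpt : ∀ x, (‖T t f x - f x‖₊ : ℝ≥0∞) ≤ ‖T t f x‖₊ + ‖f x‖₊ := by
        intro x
        exact_mod_cast nnnorm_sub_le (T t f x) (f x)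
      calc w' ≤ ∫⁻ x in Aᶜ, ((‖T t f x‖₊ : ℝ≥0∞) + ‖f x‖₊) ∂μ :=
            lintegral_mono fun x => hpt x
        _ = v + b := lintegral_add_left' hgmeas.restrict _
    calc eLpNorm (⇑(T t f) - ⇑f) 1 μ = ∫⁻ x, ‖T t f x - f x‖₊ ∂μ := by
          rw [eLpNorm_one_eq_lintegral_enorm]; simp_rw [Pi.sub_apply]; rfl
      _ = w t + w' := (lintegral_add_compl _ hA).symm
      _ ≤ w t + (v + b) := add_le_add_right hw' _
      _ ≤ w t + ((w t + b) + b) := add_le_add_right (add_le_add_left hv _) _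
      _ = 2 * w t + 2 * b := by ring
  filter_upwards [self_mem_nhdsWithin, hwsmall] with t ht hwt
  calc eLpNorm (⇑(T t f) - ⇑f) 1 μ ≤ 2 * w t + 2 * b := key t ht
    _ ≤ 2 * (ε / 4) + 2 * (ε / 4) :=
      add_le_add (mul_le_mul_right hwt _) (mul_le_mul_right hn _)
    _ = 4 * (ε / 4) := by ring
    _ ≤ ε := ENNReal.mul_div_le
end
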